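/- Define the cutoff exchange potential V_x : [0,∞) → ℝ by V_x(ρ) = α_n ρ^{1/n} for ρ ≤ R, V_x(ρ) = α_n p(ρ) for R < ρ < 2R, and V_x(ρ) = α_n p(2R) for ρ ≥ 2R, where p is the given quartic polynomial p(ρ) = ((n+1)R^{1/n−4}/(4n²))ρ⁴ − ((4n+5)R^{1/n−3}/(3n²))ρ³ + (2(n+2)R^{1/n−2}/n²)ρ² − (4R^{1/n−1}/n²)ρ + ((12n²−11n+17)R^{1/n}/(12n²)). Then V_x is twice continuously differentiable on (0,∞) and globally bounded. -/

import Mathlib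

open Set

/-- The quartic transition polynomial `p`. -/
noncomputable def transP (n : ℕ) (R : ℝ) (ρ : ℝ) : ℝ :=
  ((n + 1) * R ^ ((1 : ℝ) / n - 4) / (4 * n ^ 2)) * ρ ^ 4
    - ((4 * n + 5) * R ^ ((1 : ℝ) / n - 3) / (3 * n ^ 2)) * ρ ^ 3
    + (2 * (n + 2) * R ^ ((1 : ℝ) / n - 2) / n ^ 2) * ρ ^ 2
    - (4 * R ^ ((1 : ℝ) / n - 1) / n ^ 2) * ρ
    + ((12 * n ^ 2 - 11 * n + 17) * R ^ ((1 : ℝ) / n) / (12 * n ^ 2))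

/-- The cutoff exchange potential `V_x`. -/
noncomputable def Vx (n : ℕ) (R αn : ℝ) (ρ : ℝ) : ℝ :=
  αn * (if ρ ≤ R then ρ ^ ((1 : ℝ) / n)
        else if ρ < 2 * R then transP n R ρ
        else transP n R (2 * R))

/-- Generic glued function. -/
noncomputable def glueF (R : ℝ) (g1 g2 : ℝ → ℝ) (c : ℝ) (ρ : ℝ) : ℝ :=
  if ρ ≤ R then g1 ρ else if ρ < 2*R then g2 ρ else c

lemma glueF_hasDerivAt (R : ℝ) (hR : 0 < R) (g1 g2 d1 d2 : ℝ → ℝ) (c : ℝ)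
    (h1 : ∀ x ∈ Ioi (0:ℝ), HasDerivAt g1 (d1 x) x)
    (h2 : ∀ x : ℝ, HasDerivAt g2 (d2 x) x)
    (hv1 : g1 R = g2 R) (hd1 : d1 R = d2 R)
    (hc : c = g2 (2*R)) (hd2 : d2 (2*R) = 0) :
    ∀ x ∈ Ioi (0:ℝ), HasDerivAt (glueF R g1 g2 c) (glueF R d1 d2 0 x) x := by
  intro x hx
  have hR2 : R < 2*R := by linarith
  have hEqIcc : ∀ y ∈ Icc R (2*R), glueF R g1 g2 c y = g2 y := by
    intro y hy
    by_cases h : y ≤ R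
    · have : y = R := le_antisymm h hy.1
      simp [glueF, this, hv1]
    · by_cases h' : y < 2*R
      · simp [glueF, h, h']
      · have hy2 : y = 2*R := le_antisymm hy.2 (not_lt.mp h')
        simp [glueF, h, h', hy2, hc, not_le.mpr hR2]
  rcases lt_trichotomy x R with hxR | hxR | hxR
  · -- x < R
    rw [glueF, if_pos hxR.le]
    refine (h1 x hx).congr_of_eventuallyEq ?_
    filter_upwards [eventually_lt_nhds hxR] with y hy
    simp [glueF, hy.le]
  · -- x = R : junction
    subst hxR
    rw [glueF, if_pos le_rfl]
    have left : HasDerivWithinAt (glueF x g1 g2 c) (d1 x) (Iic x) x := by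
      refine ((h1 x hx).hasDerivWithinAt).congr ?_ ?_
      · intro y hy; simp [glueF, mem_Iic.mp hy]
      · simp [glueF]
    have right : HasDerivWithinAt (glueF x g1 g2 c) (d1 x) (Icc x (2*x)) x := by
      rw [hd1]
      exact ((h2 x).hasDerivWithinAt).congr hEqIcc (hEqIcc x ⟨le_rfl, hR2.le⟩)
    have := left.union right
    rw [Iic_union_Icc_eq_Iic hR2.le] at this
    exact this.hasDerivAt (Iic_mem_nhds hR2)
  · have h1x : ¬ x ≤ R := not_le.mpr hxR
    rcases lt_trichotomy x (2*R) with hx2 | hx2 | hx2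
    · -- R < x < 2R
      rw [glueF, if_neg h1x, if_pos hx2]
      refine (h2 x).congr_of_eventuallyEq ?_
      have : Ioo R (2*R) ∈ nhds x := Ioo_mem_nhds hxR hx2
      filter_upwards [this] with y hy
      simp [glueF, not_le.mpr hy.1, hy.2]
    · -- x = 2R junction
      rw [glueF, if_neg h1x, if_neg (by rw [hx2]; exact lt_irrefl _)]
      have left : HasDerivWithinAt (glueF R g1 g2 c) 0 (Icc R (2*R)) x := by
        have h := (h2 x).hasDerivWithinAt (s := Icc R (2*R))
        rw [show d2 x = 0 by rw [hx2, hd2]] at h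
        exact h.congr hEqIcc (by rw [hEqIcc x ⟨by linarith, hx2.le⟩])
      have right : HasDerivWithinAt (glueF R g1 g2 c) 0 (Ici (2*R)) x := by
        refine (hasDerivWithinAt_const x _ c).congr ?_ ?_
        · intro y hy
          have hy' : (2:ℝ)*R ≤ y := hy
          have hay : ¬ y ≤ R := by push_neg; linarith
          simp [glueF, hay, not_lt.mpr hy']
        · simp [glueF, h1x, not_lt.mpr hx2.ge]
      have := left.union right
      rw [Icc_union_Ici_eq_Ici hR2.le] at this
      exact this.hasDerivAt (by rw [hx2]; exact Ici_mem_nhds hR2)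
    · -- x > 2R
      have h2x : ¬ x < 2*R := not_lt.mpr hx2.le
      rw [glueF, if_neg h1x, if_neg h2x]
      refine (hasDerivAt_const x c).congr_of_eventuallyEq ?_
      filter_upwards [eventually_gt_nhds hx2] with y hy
      have : ¬ y ≤ R := by push_neg; linarith
      simp [glueF, this, not_lt.mpr hy.le]

lemma glueF_continuousOn (R : ℝ) (hR : 0 < R) (g1 g2 : ℝ → ℝ) (c : ℝ)
    (h1 : ContinuousOn g1 (Ioi 0)) (h2 : Continuous g2)
    (hv1 : g1 R = g2 R) (hc : c = g2 (2*R)) :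
    ContinuousOn (glueF R g1 g2 c) (Ioi 0) := by
  have hR2 : R < 2*R := by linarith
  have hEqIcc : ∀ y ∈ Icc R (2*R), glueF R g1 g2 c y = g2 y := by
    intro y hy
    by_cases h : y ≤ R
    · have : y = R := le_antisymm h hy.1
      simp [glueF, this, hv1]
    · by_cases h' : y < 2*R
      · simp [glueF, h, h']
      · have hy2 : y = 2*R := le_antisymm hy.2 (not_lt.mp h')
        simp [glueF, h, h', hy2, hc, not_le.mpr hR2]
  intro x hx
  rcases lt_trichotomy x R with hxR | hxR | hxR
  · refine ContinuousAt.continuousWithinAt ?_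
    refine ((h1.continuousAt (Ioi_mem_nhds hx)).congr ?_)
    filter_upwards [eventually_lt_nhds hxR] with y hy
    simp [glueF, hy.le]
  · subst hxR
    refine ContinuousAt.continuousWithinAt ?_
    have left : ContinuousWithinAt (glueF x g1 g2 c) (Iic x) x := by
      refine ((h1.continuousAt (Ioi_mem_nhds hx)).continuousWithinAt).congr ?_ ?_
      · intro y hy; simp [glueF, mem_Iic.mp hy]
      · simp [glueF]
    have right : ContinuousWithinAt (glueF x g1 g2 c) (Icc x (2*x)) x := by
      refine (h2.continuousWithinAt).congr hEqIcc (hEqIcc x ⟨le_rfl, hR2.le⟩)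
    have := left.union right
    rw [Iic_union_Icc_eq_Iic hR2.le] at this
    exact this.continuousAt (Iic_mem_nhds hR2)
  · have h1x : ¬ x ≤ R := not_le.mpr hxR
    rcases lt_trichotomy x (2*R) with hx2 | hx2 | hx2
    · refine ContinuousAt.continuousWithinAt ?_
      refine (h2.continuousAt.congr  ?_)
      filter_upwards [Ioo_mem_nhds hxR hx2] with y hy
      simp [glueF, not_le.mpr hy.1, hy.2]
    · refine ContinuousAt.continuousWithinAt ?_
      have left : ContinuousWithinAt (glueF R g1 g2 c) (Icc R (2*R)) x := by
        exact (h2.continuousWithinAt).congr hEqIcc (by rw [hx2]; exact hEqIcc (2*R) ⟨hR2.le, le_rfl⟩)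
      have right : ContinuousWithinAt (glueF R g1 g2 c) (Ici (2*R)) x := by
        refine (continuousWithinAt_const (b := c)).congr ?_ ?_
        · intro y hy
          have hy' : (2:ℝ)*R ≤ y := hy
          have hay : ¬ y ≤ R := by push_neg; linarith
          simp [glueF, hay, not_lt.mpr hy']
        · simp [glueF, h1x, not_lt.mpr hx2.ge]
      have := left.union right
      rw [Icc_union_Ici_eq_Ici hR2.le] at this
      exact this.continuousAt (by rw [hx2]; exact Ici_mem_nhds hR2)
    · refine ContinuousAt.continuousWithinAt ?_
      refine ((continuousAt_const (y := c)).congr ?_)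
      filter_upwards [eventually_gt_nhds hx2] with y hy
      have : ¬ y ≤ R := by push_neg; linarith
      simp [glueF, this, not_lt.mpr hy.le]

/-- First derivative of the transition polynomial. -/
noncomputable def transP1 (n : ℕ) (R : ℝ) (ρ : ℝ) : ℝ :=
  ((n + 1) * R ^ ((1 : ℝ) / n - 4) / (4 * n ^ 2)) * (4 * ρ ^ 3)
    - ((4 * n + 5) * R ^ ((1 : ℝ) / n - 3) / (3 * n ^ 2)) * (3 * ρ ^ 2)
    + (2 * (n + 2) * R ^ ((1 : ℝ) / n - 2) / n ^ 2) * (2 * ρ)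
    - (4 * R ^ ((1 : ℝ) / n - 1) / n ^ 2)

/-- Second derivative of the transition polynomial. -/
noncomputable def transP2 (n : ℕ) (R : ℝ) (ρ : ℝ) : ℝ :=
  ((n + 1) * R ^ ((1 : ℝ) / n - 4) / (4 * n ^ 2)) * (12 * ρ ^ 2)
    - ((4 * n + 5) * R ^ ((1 : ℝ) / n - 3) / (3 * n ^ 2)) * (6 * ρ)
    + (2 * (n + 2) * R ^ ((1 : ℝ) / n - 2) / n ^ 2) * 2

lemma hasDerivAt_transP (n : ℕ) (R x : ℝ) : HasDerivAt (transP n R) (transP1 n R x) x := by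
  unfold transP transP1
  have h4 : HasDerivAt (fun ρ : ℝ => ρ ^ 4) (4 * x ^ 3) x := by simpa using hasDerivAt_pow 4 x
  have h3 : HasDerivAt (fun ρ : ℝ => ρ ^ 3) (3 * x ^ 2) x := by simpa using hasDerivAt_pow 3 x
  have h2 : HasDerivAt (fun ρ : ℝ => ρ ^ 2) (2 * x) x := by simpa using hasDerivAt_pow 2 x
  have h1 : HasDerivAt (fun ρ : ℝ => ρ) 1 x := hasDerivAt_id x
  have := ((((h4.const_mul ((n + 1) * R ^ ((1 : ℝ) / n - 4) / (4 * n ^ 2))).sub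
      (h3.const_mul ((4 * n + 5) * R ^ ((1 : ℝ) / n - 3) / (3 * n ^ 2)))).add
      (h2.const_mul (2 * (n + 2) * R ^ ((1 : ℝ) / n - 2) / n ^ 2))).sub
      (h1.const_mul (4 * R ^ ((1 : ℝ) / n - 1) / n ^ 2))).add_const
      ((12 * n ^ 2 - 11 * n + 17) * R ^ ((1 : ℝ) / n) / (12 * n ^ 2))
  exact this.congr_deriv (by ring)

lemma hasDerivAt_transP1 (n : ℕ) (R x : ℝ) : HasDerivAt (transP1 n R) (transP2 n R x) x := by
  unfold transP1 transP2
  have h3 : HasDerivAt (fun ρ : ℝ => 4 * ρ ^ 3) (4 * (3 * x ^ 2)) x := by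
    simpa using (hasDerivAt_pow 3 x).const_mul 4
  have h2 : HasDerivAt (fun ρ : ℝ => 3 * ρ ^ 2) (3 * (2 * x)) x := by
    simpa using (hasDerivAt_pow 2 x).const_mul 3
  have h1 : HasDerivAt (fun ρ : ℝ => 2 * ρ) 2 x := by
    simpa using (hasDerivAt_id x).const_mul 2
  have := (((h3.const_mul ((n + 1) * R ^ ((1 : ℝ) / n - 4) / (4 * n ^ 2))).sub
      (h2.const_mul ((4 * n + 5) * R ^ ((1 : ℝ) / n - 3) / (3 * n ^ 2)))).add
      (h1.const_mul (2 * (n + 2) * R ^ ((1 : ℝ) / n - 2) / n ^ 2))).sub_const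
      (4 * R ^ ((1 : ℝ) / n - 1) / n ^ 2)
  exact this.congr_deriv (by ring)

section identities
variable {n : ℕ} {R : ℝ}

lemma rpow_sub_eq (hR : 0 < R) (a : ℝ) (k : ℕ) : R ^ (a - k) = R ^ a / R ^ k := by
  rw [Real.rpow_sub hR, Real.rpow_natCast]

lemma transP_at_R (hn : (n:ℝ) ≠ 0) (hR : 0 < R) : transP n R R = R ^ ((1:ℝ)/n) := by
  have hR0 : R ≠ 0 := hR.ne'
  unfold transP
  rw [show ((1:ℝ)/n - 4) = ((1:ℝ)/n - (4:ℕ)) by norm_num, rpow_sub_eq hR _ 4,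
      show ((1:ℝ)/n - 3) = ((1:ℝ)/n - (3:ℕ)) by norm_num, rpow_sub_eq hR _ 3,
      show ((1:ℝ)/n - 2) = ((1:ℝ)/n - (2:ℕ)) by norm_num, rpow_sub_eq hR _ 2,
      show ((1:ℝ)/n - 1) = ((1:ℝ)/n - (1:ℕ)) by norm_num, rpow_sub_eq hR _ 1]
  field_simp
  ring

lemma transP1_at_R (hn : (n:ℝ) ≠ 0) (hR : 0 < R) :
    transP1 n R R = (1/(n:ℝ)) * R ^ ((1:ℝ)/n - 1) := by
  have hR0 : R ≠ 0 := hR.ne'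
  unfold transP1
  rw [show ((1:ℝ)/n - 4) = ((1:ℝ)/n - (4:ℕ)) by norm_num, rpow_sub_eq hR _ 4,
      show ((1:ℝ)/n - 3) = ((1:ℝ)/n - (3:ℕ)) by norm_num, rpow_sub_eq hR _ 3,
      show ((1:ℝ)/n - 2) = ((1:ℝ)/n - (2:ℕ)) by norm_num, rpow_sub_eq hR _ 2,
      show ((1:ℝ)/n - 1) = ((1:ℝ)/n - (1:ℕ)) by norm_num, rpow_sub_eq hR _ 1]
  field_simp
  ring

lemma transP2_at_R (hn : (n:ℝ) ≠ 0) (hR : 0 < R) :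
    transP2 n R R = (1/(n:ℝ)) * (((1:ℝ)/n - 1) * R ^ ((1:ℝ)/n - 2)) := by
  have hR0 : R ≠ 0 := hR.ne'
  unfold transP2
  rw [show ((1:ℝ)/n - 4) = ((1:ℝ)/n - (4:ℕ)) by norm_num, rpow_sub_eq hR _ 4,
      show ((1:ℝ)/n - 3) = ((1:ℝ)/n - (3:ℕ)) by norm_num, rpow_sub_eq hR _ 3,
      show ((1:ℝ)/n - 2) = ((1:ℝ)/n - (2:ℕ)) by norm_num, rpow_sub_eq hR _ 2]
  field_simp
  ring

lemma transP1_at_2R (hn : (n:ℝ) ≠ 0) (hR : 0 < R) : transP1 n R (2*R) = 0 := by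
  have hR0 : R ≠ 0 := hR.ne'
  unfold transP1
  rw [show ((1:ℝ)/n - 4) = ((1:ℝ)/n - (4:ℕ)) by norm_num, rpow_sub_eq hR _ 4,
      show ((1:ℝ)/n - 3) = ((1:ℝ)/n - (3:ℕ)) by norm_num, rpow_sub_eq hR _ 3,
      show ((1:ℝ)/n - 2) = ((1:ℝ)/n - (2:ℕ)) by norm_num, rpow_sub_eq hR _ 2,
      show ((1:ℝ)/n - 1) = ((1:ℝ)/n - (1:ℕ)) by norm_num, rpow_sub_eq hR _ 1]
  field_simp
  ring

lemma transP2_at_2R (hn : (n:ℝ) ≠ 0) (hR : 0 < R) : transP2 n R (2*R) = 0 := by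
  have hR0 : R ≠ 0 := hR.ne'
  unfold transP2
  rw [show ((1:ℝ)/n - 4) = ((1:ℝ)/n - (4:ℕ)) by norm_num, rpow_sub_eq hR _ 4,
      show ((1:ℝ)/n - 3) = ((1:ℝ)/n - (3:ℕ)) by norm_num, rpow_sub_eq hR _ 3,
      show ((1:ℝ)/n - 2) = ((1:ℝ)/n - (2:ℕ)) by norm_num, rpow_sub_eq hR _ 2]
  field_simp
  ring

end identities

/-- The cutoff exchange potential `V_x` is twice continuously differentiable
on `(0,∞)` and globally bounded on `[0,∞)`. -/
theorem stmt3 (n : ℕ) (hn : n = 2 ∨ n = 3) (R αn : ℝ) (hR : 0 < R) :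
    ContDiffOn ℝ 2 (Vx n R αn) (Ioi (0 : ℝ)) ∧
      ∃ M : ℝ, ∀ ρ : ℝ, 0 ≤ ρ → |Vx n R αn ρ| ≤ M := by
  have hn0 : (n:ℝ) ≠ 0 := by rcases hn with h | h <;> simp [h]
  set a : ℝ := (1:ℝ)/n with ha_def
  have ha : 0 < a := by
    rcases hn with h | h <;> simp [ha_def, h]
  set F0 : ℝ → ℝ := glueF R (fun y => y ^ a) (transP n R) (transP n R (2*R)) with hF0def
  set F1 : ℝ → ℝ := glueF R (fun y => a * y ^ (a-1)) (transP1 n R) 0 with hF1def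
  set F2 : ℝ → ℝ := glueF R (fun y => a * ((a-1) * y ^ (a-2))) (transP2 n R) 0 with hF2def
  have hVx : Vx n R αn = fun ρ => αn * F0 ρ := rfl
  -- derivative chain
  have hD0 : ∀ x ∈ Ioi (0:ℝ), HasDerivAt F0 (F1 x) x := by
    refine glueF_hasDerivAt R hR _ _ _ _ _
      (fun x hx => Real.hasDerivAt_rpow_const (Or.inl (ne_of_gt hx)))
      (hasDerivAt_transP n R) ?_ ?_ rfl (transP1_at_2R hn0 hR)
    · exact (transP_at_R hn0 hR).symm
    · exact (transP1_at_R hn0 hR).symm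
  have hD1 : ∀ x ∈ Ioi (0:ℝ), HasDerivAt F1 (F2 x) x := by
    refine glueF_hasDerivAt R hR _ _ _ _ _
      (fun x hx => by
        have h := (Real.hasDerivAt_rpow_const (p := a-1) (Or.inl (ne_of_gt hx))).const_mul a
        rw [show a - 1 - 1 = a - 2 by ring] at h
        exact h)
      (hasDerivAt_transP1 n R) ?_ ?_ (transP1_at_2R hn0 hR).symm (transP2_at_2R hn0 hR)
    · exact (transP1_at_R hn0 hR).symm
    · exact (transP2_at_R hn0 hR).symm
  have hC2 : ContinuousOn F2 (Ioi (0:ℝ)) := by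
    refine glueF_continuousOn R hR _ _ _ ?_ ?_ (transP2_at_R hn0 hR).symm
      (transP2_at_2R hn0 hR).symm
    · intro x hx
      have h : ContinuousAt (fun y : ℝ => y ^ (a-2)) x :=
        Real.continuousAt_rpow_const x (a-2) (Or.inl (ne_of_gt hx))
      exact (continuousAt_const.mul (continuousAt_const.mul h)).continuousWithinAt
    · unfold transP2; fun_prop
  -- C² of F0
  have hCD1 : ContDiffOn ℝ 1 F1 (Ioi (0:ℝ)) := by
    rw [show (1 : WithTop ℕ∞) = 0 + 1 from rfl,
        contDiffOn_succ_iff_deriv_of_isOpen isOpen_Ioi]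
    refine ⟨fun x hx => (hD1 x hx).differentiableAt.differentiableWithinAt, by simp, ?_⟩
    rw [contDiffOn_zero]
    exact hC2.congr fun x hx => ((hD1 x hx).deriv)
  have hCD0 : ContDiffOn ℝ 2 F0 (Ioi (0:ℝ)) := by
    rw [show (2 : WithTop ℕ∞) = 1 + 1 from rfl,
        contDiffOn_succ_iff_deriv_of_isOpen isOpen_Ioi]
    refine ⟨fun x hx => (hD0 x hx).differentiableAt.differentiableWithinAt, by simp, ?_⟩
    exact hCD1.congr fun x hx => ((hD0 x hx).deriv)
  constructor
  · rw [hVx]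
    exact contDiffOn_const.mul hCD0
  · -- boundedness
    have hcont : ContinuousOn (Vx n R αn) (Icc 0 (2*R)) := by
      intro x hx
      rcases eq_or_lt_of_le hx.1 with h0 | h0
      · -- x = 0
        subst h0
        have hra : ContinuousAt (fun y : ℝ => y ^ a) 0 :=
          Real.continuousAt_rpow_const 0 a (Or.inr ha.le)
        have hrc : ContinuousWithinAt (fun y : ℝ => αn * y ^ a) (Icc 0 (2*R)) 0 :=
          (continuousAt_const.mul hra).continuousWithinAt
        have hmem : Iic R ∈ nhdsWithin (0:ℝ) (Icc 0 (2*R)) :=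
          mem_nhdsWithin_of_mem_nhds (Iic_mem_nhds hR)
        refine hrc.congr_of_eventuallyEq ?_ ?_
        · filter_upwards [hmem] with y hy
          simp [Vx, mem_Iic.mp hy, ha_def, one_div]
        · simp [Vx, hR.le, ha_def, one_div]
      · rw [hVx]
        exact (continuousAt_const.mul (hD0 x h0).continuousAt).continuousWithinAt
    obtain ⟨M, hM⟩ := (isCompact_Icc (a := (0:ℝ)) (b := 2*R)).exists_bound_of_continuousOn hcont
    refine ⟨M, fun ρ hρ => ?_⟩
    by_cases h2ρ : ρ ≤ 2*R
    · simpa [Real.norm_eq_abs] using hM ρ ⟨hρ, h2ρ⟩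
    · have hρ2 : 2*R < ρ := not_le.mp h2ρ
      have he : Vx n R αn ρ = Vx n R αn (2*R) := by
        have h1 : ¬ ρ ≤ R := by push_neg; linarith
        have h2 : ¬ ρ < 2*R := not_lt.mpr hρ2.le
        simp [Vx, h1, h2, not_le.mpr (show R < 2*R by linarith), lt_irrefl]
      rw [he]
      simpa [Real.norm_eq_abs] using hM (2*R) ⟨by linarith, le_rfl⟩
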